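/- Let φ_t be the Riccati semigroup with parameters (A, R, S) and φ̄_t the Riccati semigroup with parameters (A, R̄, S̄), where R ≥ R̄ > 0 and S̄ ≥ S > 0. Let λ = 2√(A² + RS), λ̄ = 2√(A² + R̄S̄), ϖ = 1 − ϖ₊/ϖ₋, ϖ̄ = 1 − ϖ̄₊/ϖ̄₋, and φ⋆(x) = max(x, ϖ₊). Then for all x ≥ 0 and t ≥ 0: 0 ≤ φ_t(x) − φ̄_t(x) ≤ 2(λ + λ̄)^{−1} ϖ̄ ϖ ((R − R̄) + (S̄ − S)φ⋆(x)²). -/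

import Mathlib

noncomputable def Gf (p m y e : ℝ) : ℝ :=
  p + (y - p) * ((p - m) * e) / ((p - m) * e + (y - m) * (1 - e))

lemma Gf_one (p m y : ℝ) (h : p - m ≠ 0) : Gf p m y 1 = y := by
  unfold Gf; rw [mul_one, sub_self, mul_zero, add_zero, mul_div_assoc, div_self h, mul_one]; ring

lemma Gf_denom_pos (p m y e : ℝ) (hp : 0 < p) (hm : m < 0) (hy : 0 ≤ y)
    (he : 0 < e) (he1 : e ≤ 1) : 0 < (p - m) * e + (y - m) * (1 - e) := by
  nlinarith

lemma Gf_nonneg (p m y e : ℝ) (hp : 0 < p) (hm : m < 0) (hy : 0 ≤ y)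
    (he : 0 < e) (he1 : e ≤ 1) : 0 ≤ Gf p m y e := by
  have hD := Gf_denom_pos p m y e hp hm hy he he1
  have hrw : Gf p m y e = (y * (p - m * e) - p * m * (1 - e)) / ((p - m) * e + (y - m) * (1 - e)) := by
    unfold Gf; field_simp; ring
  rw [hrw]
  apply div_nonneg _ hD.le
  nlinarith [mul_nonneg hy (by nlinarith : (0:ℝ) ≤ p - m * e),
    mul_nonneg (mul_pos hp (neg_pos.2 hm)).le (sub_nonneg.2 he1)]

lemma Gf_le_max (p m y e : ℝ) (hp : 0 < p) (hm : m < 0) (hy : 0 ≤ y)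
    (he : 0 < e) (he1 : e ≤ 1) : Gf p m y e ≤ max y p := by
  have hD := Gf_denom_pos p m y e hp hm hy he he1
  rcases le_total y p with hc | hc
  · refine le_trans ?_ (le_max_right y p)
    unfold Gf
    have : (y - p) * ((p - m) * e) / ((p - m) * e + (y - m) * (1 - e)) ≤ 0 := by
      apply div_nonpos_of_nonpos_of_nonneg _ hD.le
      nlinarith [mul_nonneg (sub_nonneg.2 hc) (mul_nonneg (by linarith : (0:ℝ) ≤ p - m) he.le)]
    linarith
  · refine le_trans ?_ (le_max_left y p)
    have hrw : Gf p m y e = (y * (p - m * e) - p * m * (1 - e)) / ((p - m) * e + (y - m) * (1 - e)) := by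
      unfold Gf; field_simp; ring
    rw [hrw, div_le_iff₀ hD]
    nlinarith [mul_nonneg (mul_nonneg (sub_nonneg.2 he1) (sub_nonneg.2 hc)) (sub_nonneg.2 (le_trans hm.le hy))]

lemma hasDerivAt_Gf (p m y e : ℝ) (h : (p - m) * e + (y - m) * (1 - e) ≠ 0) :
    HasDerivAt (fun e => Gf p m y e)
      ((y - p) * (p - m) * (y - m) / ((p - m) * e + (y - m) * (1 - e)) ^ 2) e := by
  have h1 : HasDerivAt (fun e : ℝ => (y - p) * ((p - m) * e)) ((y - p) * (p - m)) e := by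
    simpa [mul_assoc] using (hasDerivAt_id e).const_mul ((y - p) * (p - m))
  have h2 : HasDerivAt (fun e : ℝ => (p - m) * e + (y - m) * (1 - e)) ((p - m) + (y - m) * (0 - 1)) e := by
    have := ((hasDerivAt_id e).const_mul (p - m)).add
      (((hasDerivAt_const e 1).sub (hasDerivAt_id e)).const_mul (y - m))
    exact this.congr_deriv (by ring)
  have := (h1.div h2 h).const_add p
  refine this.congr_deriv ?_
  field_simp
  ring

lemma hasDerivAt_psi (p m S x t s : ℝ)
    (hD : (p - m) * Real.exp (-(S * (p - m)) * (t - s)) + (x - m) * (1 - Real.exp (-(S * (p - m)) * (t - s))) ≠ 0) :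
    HasDerivAt (fun σ => Gf p m x (Real.exp (-(S * (p - m)) * (t - σ))))
      (-(S * (p - Gf p m x (Real.exp (-(S * (p - m)) * (t - s)))) *
        (Gf p m x (Real.exp (-(S * (p - m)) * (t - s))) - m))) s := by
  set c := S * (p - m) with hc
  have hlin : HasDerivAt (fun σ : ℝ => -c * (t - σ)) c s := by
    have := ((hasDerivAt_const s t).sub (hasDerivAt_id s)).const_mul (-c)
    simpa using this
  have hE := hlin.exp
  have := (hasDerivAt_Gf p m x (Real.exp (-c * (t - s))) hD).comp s hE
  refine this.congr_deriv ?_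
  unfold Gf
  rw [hc]
  generalize Real.exp (-(S * (p - m)) * (t - s)) = E at hD ⊢
  field_simp
  ring

lemma hasDerivAt_K (p m S : ℝ) (ψ : ℝ → ℝ) (w s : ℝ) (hψ : HasDerivAt ψ w s)
    (hD : (p - m) * Real.exp (-(S * (p - m)) * s) + (ψ s - m) * (1 - Real.exp (-(S * (p - m)) * s)) ≠ 0) :
    HasDerivAt (fun σ => Gf p m (ψ σ) (Real.exp (-(S * (p - m)) * σ)))
      ((p - m) ^ 2 * Real.exp (-(S * (p - m)) * s) * (S * (p - ψ s) * (ψ s - m) + w) /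
        ((p - m) * Real.exp (-(S * (p - m)) * s) + (ψ s - m) * (1 - Real.exp (-(S * (p - m)) * s))) ^ 2) s := by
  set c := S * (p - m) with hc
  have hlin : HasDerivAt (fun σ : ℝ => -c * σ) (-c) s := by
    simpa using (hasDerivAt_id s).const_mul (-c)
  have hE := hlin.exp
  have hnum : HasDerivAt (fun σ => (ψ σ - p) * ((p - m) * Real.exp (-c * σ)))
      (w * ((p - m) * Real.exp (-c * s)) + (ψ s - p) * ((p - m) * (Real.exp (-c * s) * -c))) s :=
    (hψ.sub_const p).mul (hE.const_mul (p - m))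
  have hden : HasDerivAt (fun σ => (p - m) * Real.exp (-c * σ) + (ψ σ - m) * (1 - Real.exp (-c * σ)))
      ((p - m) * (Real.exp (-c * s) * -c) +
        (w * (1 - Real.exp (-c * s)) + (ψ s - m) * (0 - Real.exp (-c * s) * -c))) s :=
    (hE.const_mul (p - m)).add ((hψ.sub_const m).mul ((hasDerivAt_const s 1).sub hE))
  have := (hnum.div hden hD).const_add p
  refine this.congr_deriv ?_
  field_simp
  ring

lemma hasDerivAt_MM (p m S C s : ℝ) (hS : S ≠ 0) (hp : p ≠ 0)
    (h : p * Real.exp (-(S * (p - m)) * s) - m ≠ 0) :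
    HasDerivAt (fun σ => C * (p - m) / (S * p) * (p * Real.exp (-(S * (p - m)) * σ) - m)⁻¹)
      (C * (p - m) ^ 2 * Real.exp (-(S * (p - m)) * s) / (p * Real.exp (-(S * (p - m)) * s) - m) ^ 2) s := by
  set c := S * (p - m) with hc
  have hlin : HasDerivAt (fun σ : ℝ => -c * σ) (-c) s := by
    simpa using (hasDerivAt_id s).const_mul (-c)
  have hE := hlin.exp
  have hd : HasDerivAt (fun σ => p * Real.exp (-c * σ) - m) (p * (Real.exp (-c * s) * -c)) s :=
    (hE.const_mul p).sub_const m
  have := (hd.inv h).const_mul (C * (p - m) / (S * p))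
  refine this.congr_deriv ?_
  rw [hc] at h ⊢
  generalize Real.exp (-(S * (p - m)) * s) = E at h ⊢
  field_simp

lemma core (S1 p1 m1 S2 p2 m2 x t B C1 C2 : ℝ)
    (hS1 : 0 < S1) (hp1 : 0 < p1) (hm1 : m1 < 0)
    (hS2 : 0 < S2) (hp2 : 0 < p2) (hm2 : m2 < 0)
    (hx : 0 ≤ x) (ht : 0 ≤ t) (hBx : x ≤ B) (hBp : p2 ≤ B)
    (hC1 : 0 ≤ C1) (hC2 : 0 ≤ C2)
    (hlow : ∀ y, 0 ≤ y → y ≤ B → -C2 ≤ S1 * (p1 - y) * (y - m1) - S2 * (p2 - y) * (y - m2))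
    (hupp : ∀ y, 0 ≤ y → y ≤ B → S1 * (p1 - y) * (y - m1) - S2 * (p2 - y) * (y - m2) ≤ C1) :
    -(C2 / (S1 * (-m1))) ≤
        Gf p1 m1 x (Real.exp (-(S1 * (p1 - m1)) * t)) - Gf p2 m2 x (Real.exp (-(S2 * (p2 - m2)) * t)) ∧
      Gf p1 m1 x (Real.exp (-(S1 * (p1 - m1)) * t)) - Gf p2 m2 x (Real.exp (-(S2 * (p2 - m2)) * t)) ≤
        C1 / (S1 * (-m1)) := by
  have hpm1 : (0:ℝ) < p1 - m1 := by linarith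
  have hpm2 : (0:ℝ) < p2 - m2 := by linarith
  set ψ : ℝ → ℝ := fun σ => Gf p2 m2 x (Real.exp (-(S2 * (p2 - m2)) * (t - σ))) with hψdef
  set K : ℝ → ℝ := fun σ => Gf p1 m1 (ψ σ) (Real.exp (-(S1 * (p1 - m1)) * σ)) with hKdef
  -- basic facts about ψ on [0,t]
  have hE2pos : ∀ s : ℝ, 0 < Real.exp (-(S2 * (p2 - m2)) * (t - s)) := fun s => Real.exp_pos _
  have hE2le : ∀ s ∈ Set.Icc (0:ℝ) t, Real.exp (-(S2 * (p2 - m2)) * (t - s)) ≤ 1 := by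
    intro s hs
    apply Real.exp_le_one_iff.2
    have h1 : 0 ≤ t - s := by linarith [hs.2]
    nlinarith [mul_pos hS2 hpm2]
  have hψnn : ∀ s ∈ Set.Icc (0:ℝ) t, 0 ≤ ψ s := fun s hs =>
    Gf_nonneg _ _ _ _ hp2 hm2 hx (hE2pos s) (hE2le s hs)
  have hψle : ∀ s ∈ Set.Icc (0:ℝ) t, ψ s ≤ B := fun s hs =>
    (Gf_le_max _ _ _ _ hp2 hm2 hx (hE2pos s) (hE2le s hs)).trans (max_le hBx hBp)
  have hψden : ∀ s ∈ Set.Icc (0:ℝ) t,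
      0 < (p2 - m2) * Real.exp (-(S2 * (p2 - m2)) * (t - s)) +
        (x - m2) * (1 - Real.exp (-(S2 * (p2 - m2)) * (t - s))) := fun s hs =>
    Gf_denom_pos _ _ _ _ hp2 hm2 hx (hE2pos s) (hE2le s hs)
  have hψder : ∀ s ∈ Set.Icc (0:ℝ) t,
      HasDerivAt ψ (-(S2 * (p2 - ψ s) * (ψ s - m2))) s := fun s hs =>
    hasDerivAt_psi p2 m2 S2 x t s (ne_of_gt (hψden s hs))
  -- facts about E1
  have hE1pos : ∀ s : ℝ, 0 < Real.exp (-(S1 * (p1 - m1)) * s) := fun s => Real.exp_pos _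
  have hE1le : ∀ s ∈ Set.Icc (0:ℝ) t, Real.exp (-(S1 * (p1 - m1)) * s) ≤ 1 := by
    intro s hs
    apply Real.exp_le_one_iff.2
    nlinarith [mul_pos hS1 hpm1, hs.1]
  have hden1 : ∀ s ∈ Set.Icc (0:ℝ) t,
      0 < (p1 - m1) * Real.exp (-(S1 * (p1 - m1)) * s) +
        (ψ s - m1) * (1 - Real.exp (-(S1 * (p1 - m1)) * s)) := fun s hs =>
    Gf_denom_pos _ _ _ _ hp1 hm1 (hψnn s hs) (hE1pos s) (hE1le s hs)
  -- derivative of K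
  set KD : ℝ → ℝ := fun s =>
    (p1 - m1) ^ 2 * Real.exp (-(S1 * (p1 - m1)) * s) *
        (S1 * (p1 - ψ s) * (ψ s - m1) - S2 * (p2 - ψ s) * (ψ s - m2)) /
      ((p1 - m1) * Real.exp (-(S1 * (p1 - m1)) * s) +
        (ψ s - m1) * (1 - Real.exp (-(S1 * (p1 - m1)) * s))) ^ 2 with hKDdef
  have hKder : ∀ s ∈ Set.Icc (0:ℝ) t, HasDerivAt K (KD s) s := by
    intro s hs
    have := hasDerivAt_K p1 m1 S1 ψ (-(S2 * (p2 - ψ s) * (ψ s - m2))) s (hψder s hs)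
      (ne_of_gt (hden1 s hs))
    convert this using 1
    simp only [hKDdef]; ring
  -- the comparison function MM
  set MM : ℝ → ℝ → ℝ := fun C σ =>
    C * (p1 - m1) / (S1 * p1) * (p1 * Real.exp (-(S1 * (p1 - m1)) * σ) - m1)⁻¹ with hMMdef
  set MD : ℝ → ℝ → ℝ := fun C s =>
    C * (p1 - m1) ^ 2 * Real.exp (-(S1 * (p1 - m1)) * s) /
      (p1 * Real.exp (-(S1 * (p1 - m1)) * s) - m1) ^ 2 with hMDdef
  have hdpos : ∀ s : ℝ, 0 < p1 * Real.exp (-(S1 * (p1 - m1)) * s) - m1 := by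
    intro s
    nlinarith [mul_pos hp1 (hE1pos s)]
  have hMder : ∀ (C : ℝ) (s : ℝ), HasDerivAt (MM C) (MD C s) s := fun C s =>
    hasDerivAt_MM p1 m1 S1 C s (ne_of_gt hS1) (ne_of_gt hp1) (ne_of_gt (hdpos s))
  -- pointwise derivative bounds
  have hdleD : ∀ s ∈ Set.Icc (0:ℝ) t,
      p1 * Real.exp (-(S1 * (p1 - m1)) * s) - m1 ≤
        (p1 - m1) * Real.exp (-(S1 * (p1 - m1)) * s) +
          (ψ s - m1) * (1 - Real.exp (-(S1 * (p1 - m1)) * s)) := by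
    intro s hs
    nlinarith [mul_nonneg (hψnn s hs) (sub_nonneg.2 (hE1le s hs))]
  have hKD_le : ∀ s ∈ Set.Icc (0:ℝ) t, KD s ≤ MD C1 s := by
    intro s hs
    have h1 := hdpos s
    have h2 := hden1 s hs
    have h3 := hdleD s hs
    have hnum : (p1 - m1) ^ 2 * Real.exp (-(S1 * (p1 - m1)) * s) *
        (S1 * (p1 - ψ s) * (ψ s - m1) - S2 * (p2 - ψ s) * (ψ s - m2)) ≤
        C1 * (p1 - m1) ^ 2 * Real.exp (-(S1 * (p1 - m1)) * s) := by
      have := hupp (ψ s) (hψnn s hs) (hψle s hs)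
      nlinarith [mul_pos (pow_pos hpm1 2) (hE1pos s)]
    simp only [hKDdef, hMDdef]
    apply div_le_div₀ (by positivity) hnum (by positivity)
    exact pow_le_pow_left₀ h1.le h3 2
  have hKD_ge : ∀ s ∈ Set.Icc (0:ℝ) t, -(MD C2 s) ≤ KD s := by
    intro s hs
    have h1 := hdpos s
    have h2 := hden1 s hs
    have h3 := hdleD s hs
    have hd2 : (p1 * Real.exp (-(S1 * (p1 - m1)) * s) - m1) ^ 2 ≤
        ((p1 - m1) * Real.exp (-(S1 * (p1 - m1)) * s) +
          (ψ s - m1) * (1 - Real.exp (-(S1 * (p1 - m1)) * s))) ^ 2 :=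
      pow_le_pow_left₀ h1.le h3 2
    have hnum : -(C2 * (p1 - m1) ^ 2 * Real.exp (-(S1 * (p1 - m1)) * s)) ≤
        (p1 - m1) ^ 2 * Real.exp (-(S1 * (p1 - m1)) * s) *
          (S1 * (p1 - ψ s) * (ψ s - m1) - S2 * (p2 - ψ s) * (ψ s - m2)) := by
      have := hlow (ψ s) (hψnn s hs) (hψle s hs)
      nlinarith [mul_pos (pow_pos hpm1 2) (hE1pos s)]
    simp only [hKDdef, hMDdef]
    have step1 : C2 * (p1 - m1) ^ 2 * Real.exp (-(S1 * (p1 - m1)) * s) /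
        ((p1 - m1) * Real.exp (-(S1 * (p1 - m1)) * s) +
          (ψ s - m1) * (1 - Real.exp (-(S1 * (p1 - m1)) * s))) ^ 2 ≤
        C2 * (p1 - m1) ^ 2 * Real.exp (-(S1 * (p1 - m1)) * s) /
        (p1 * Real.exp (-(S1 * (p1 - m1)) * s) - m1) ^ 2 :=
      div_le_div₀ (by positivity) le_rfl (by positivity) hd2
    have step2 : -(C2 * (p1 - m1) ^ 2 * Real.exp (-(S1 * (p1 - m1)) * s)) /
        ((p1 - m1) * Real.exp (-(S1 * (p1 - m1)) * s) +
          (ψ s - m1) * (1 - Real.exp (-(S1 * (p1 - m1)) * s))) ^ 2 ≤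
        (p1 - m1) ^ 2 * Real.exp (-(S1 * (p1 - m1)) * s) *
          (S1 * (p1 - ψ s) * (ψ s - m1) - S2 * (p2 - ψ s) * (ψ s - m2)) /
        ((p1 - m1) * Real.exp (-(S1 * (p1 - m1)) * s) +
          (ψ s - m1) * (1 - Real.exp (-(S1 * (p1 - m1)) * s))) ^ 2 := by
      gcongr
    calc -(C2 * (p1 - m1) ^ 2 * Real.exp (-(S1 * (p1 - m1)) * s) /
        (p1 * Real.exp (-(S1 * (p1 - m1)) * s) - m1) ^ 2)
        ≤ -(C2 * (p1 - m1) ^ 2 * Real.exp (-(S1 * (p1 - m1)) * s) /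
          ((p1 - m1) * Real.exp (-(S1 * (p1 - m1)) * s) +
            (ψ s - m1) * (1 - Real.exp (-(S1 * (p1 - m1)) * s))) ^ 2) := neg_le_neg step1
      _ = -(C2 * (p1 - m1) ^ 2 * Real.exp (-(S1 * (p1 - m1)) * s)) /
          ((p1 - m1) * Real.exp (-(S1 * (p1 - m1)) * s) +
            (ψ s - m1) * (1 - Real.exp (-(S1 * (p1 - m1)) * s))) ^ 2 := (neg_div _ _).symm
      _ ≤ _ := step2
  have h0t : (0:ℝ) ∈ Set.Icc (0:ℝ) t := Set.left_mem_Icc.2 ht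
  have htt : t ∈ Set.Icc (0:ℝ) t := Set.right_mem_Icc.2 ht
  have mono1 : MonotoneOn (fun s => MM C1 s - K s) (Set.Icc 0 t) := by
    apply monotoneOn_of_deriv_nonneg (convex_Icc 0 t)
    · intro s hs
      exact ((hMder C1 s).sub (hKder s hs)).continuousAt.continuousWithinAt
    · rw [interior_Icc]
      intro s hs
      exact ((hMder C1 s).sub (hKder s (Set.Ioo_subset_Icc_self hs))).differentiableAt.differentiableWithinAt
    · rw [interior_Icc]
      intro s hs
      rw [show deriv (fun s => MM C1 s - K s) s = MD C1 s - KD s from ((hMder C1 s).sub (hKder s (Set.Ioo_subset_Icc_self hs))).deriv]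
      have := hKD_le s (Set.Ioo_subset_Icc_self hs)
      linarith
  have mono2 : MonotoneOn (fun s => MM C2 s + K s) (Set.Icc 0 t) := by
    apply monotoneOn_of_deriv_nonneg (convex_Icc 0 t)
    · intro s hs
      exact ((hMder C2 s).add (hKder s hs)).continuousAt.continuousWithinAt
    · rw [interior_Icc]
      intro s hs
      exact ((hMder C2 s).add (hKder s (Set.Ioo_subset_Icc_self hs))).differentiableAt.differentiableWithinAt
    · rw [interior_Icc]
      intro s hs
      rw [show deriv (fun s => MM C2 s + K s) s = MD C2 s + KD s from ((hMder C2 s).add (hKder s (Set.Ioo_subset_Icc_self hs))).deriv]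
      have := hKD_ge s (Set.Ioo_subset_Icc_self hs)
      linarith
  have up := mono1 h0t htt ht
  have lo := mono2 h0t htt ht
  simp only at up lo
  have hψt : ψ t = x := by
    simp only [hψdef]
    rw [sub_self, mul_zero, Real.exp_zero, Gf_one _ _ _ (ne_of_gt hpm2)]
  have hKt : K t = Gf p1 m1 x (Real.exp (-(S1 * (p1 - m1)) * t)) := by
    simp only [hKdef, hψt]
  have hK0 : K 0 = Gf p2 m2 x (Real.exp (-(S2 * (p2 - m2)) * t)) := by
    simp only [hKdef, hψdef]
    rw [mul_zero, Real.exp_zero, Gf_one _ _ _ (ne_of_gt hpm1), sub_zero]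
  have hMMbound : ∀ C : ℝ, 0 ≤ C → MM C t - MM C 0 ≤ C / (S1 * (-m1)) := by
    intro C hC
    simp only [hMMdef]
    rw [mul_zero, Real.exp_zero, mul_one]
    have hinv : (p1 * Real.exp (-(S1 * (p1 - m1)) * t) - m1)⁻¹ ≤ (-m1)⁻¹ := by
      apply inv_anti₀ (by linarith)
      nlinarith [mul_pos hp1 (hE1pos t)]
    have hcoef : 0 ≤ C * (p1 - m1) / (S1 * p1) := by positivity
    have heq : C * (p1 - m1) / (S1 * p1) * ((-m1)⁻¹ - (p1 - m1)⁻¹) = C / (S1 * (-m1)) := by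
      have h1 : m1 ≠ 0 := ne_of_lt hm1
      field_simp [ne_of_gt hS1, ne_of_gt hp1, ne_of_gt hpm1, neg_ne_zero.2 h1]
      ring
    have hstep : C * (p1 - m1) / (S1 * p1) * (p1 * Real.exp (-(S1 * (p1 - m1)) * t) - m1)⁻¹ -
        C * (p1 - m1) / (S1 * p1) * (p1 - m1)⁻¹ =
        C * (p1 - m1) / (S1 * p1) * ((p1 * Real.exp (-(S1 * (p1 - m1)) * t) - m1)⁻¹ - (p1 - m1)⁻¹) := by
      ring
    rw [hstep, ← heq]
    apply mul_le_mul_of_nonneg_left _ hcoef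
    linarith
  constructor
  · rw [← hKt, ← hK0]
    have := hMMbound C2 hC2
    linarith
  · rw [← hKt, ← hK0]
    have := hMMbound C1 hC1
    linarith

noncomputable def lam (A R S : ℝ) : ℝ := 2 * Real.sqrt (A ^ 2 + R * S)

noncomputable def wplus (A R S : ℝ) : ℝ := (A + lam A R S / 2) / S

noncomputable def wminus (A R S : ℝ) : ℝ := (A - lam A R S / 2) / S

/-- The closed-form Riccati semigroup `φ_t(x)`. -/
noncomputable def phi (A R S t x : ℝ) : ℝ :=
  wplus A R S +
    (x - wplus A R S) * ((wplus A R S - wminus A R S) * Real.exp (-(lam A R S) * t)) /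
      ((wplus A R S - wminus A R S) * Real.exp (-(lam A R S) * t) +
        (x - wminus A R S) * (1 - Real.exp (-(lam A R S) * t)))

/-- `ϖ = 1 - ϖ₊/ϖ₋`. -/
noncomputable def vpi (A R S : ℝ) : ℝ := 1 - wplus A R S / wminus A R S

set_option maxHeartbeats 1000000 in
theorem riccati_semigroup_comparison (A R S Rb Sb : ℝ)
    (hRb : 0 < Rb) (hS : 0 < S) (hR : Rb ≤ R) (hSb : S ≤ Sb)
    (x t : ℝ) (hx : 0 ≤ x) (ht : 0 ≤ t) :
    0 ≤ phi A R S t x - phi A Rb Sb t x ∧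
      phi A R S t x - phi A Rb Sb t x ≤
        2 * (lam A R S + lam A Rb Sb)⁻¹ * vpi A Rb Sb * vpi A R S *
          ((R - Rb) + (Sb - S) * (max x (wplus A R S)) ^ 2) := by
  have hR0 : 0 < R := lt_of_lt_of_le hRb hR
  have hSb0 : 0 < Sb := lt_of_lt_of_le hS hSb
  set q := Real.sqrt (A ^ 2 + R * S) with hq
  set qb := Real.sqrt (A ^ 2 + Rb * Sb) with hqb
  have hq2 : q ^ 2 = A ^ 2 + R * S := Real.sq_sqrt (by positivity)
  have hqb2 : qb ^ 2 = A ^ 2 + Rb * Sb := Real.sq_sqrt (by positivity)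
  have hqA : |A| < q := by
    rw [hq, ← Real.sqrt_sq_eq_abs]
    exact Real.sqrt_lt_sqrt (sq_nonneg A) (by nlinarith [mul_pos hR0 hS])
  have hqbA : |A| < qb := by
    rw [hqb, ← Real.sqrt_sq_eq_abs]
    exact Real.sqrt_lt_sqrt (sq_nonneg A) (by nlinarith [mul_pos hRb hSb0])
  obtain ⟨hqA1, hqA2⟩ := abs_lt.1 hqA
  obtain ⟨hqbA1, hqbA2⟩ := abs_lt.1 hqbA
  set p := wplus A R S with hpdef0
  set m := wminus A R S with hmdef0
  set pb := wplus A Rb Sb with hpbdef0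
  set mb := wminus A Rb Sb with hmbdef0
  have hpq : p = (A + q) / S := by
    rw [hpdef0, wplus, lam, ← hq]; ring_nf
  have hmq : m = (A - q) / S := by
    rw [hmdef0, wminus, lam, ← hq]; ring_nf
  have hpbq : pb = (A + qb) / Sb := by
    rw [hpbdef0, wplus, lam, ← hqb]; ring_nf
  have hmbq : mb = (A - qb) / Sb := by
    rw [hmbdef0, wminus, lam, ← hqb]; ring_nf
  have hp : 0 < p := by rw [hpq]; exact div_pos (by linarith) hS
  have hm : m < 0 := by rw [hmq]; exact div_neg_of_neg_of_pos (by linarith) hS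
  have hpb : 0 < pb := by rw [hpbq]; exact div_pos (by linarith) hSb0
  have hmb : mb < 0 := by rw [hmbq]; exact div_neg_of_neg_of_pos (by linarith) hSb0
  have hc1 : S * (p - m) = lam A R S := by
    rw [hpq, hmq, lam, ← hq]; field_simp; ring
  have hc2 : Sb * (pb - mb) = lam A Rb Sb := by
    rw [hpbq, hmbq, lam, ← hqb]; field_simp; ring
  have hphi1 : phi A R S t x = Gf p m x (Real.exp (-(S * (p - m)) * t)) := by
    simp only [phi, Gf, hc1, ← hpdef0, ← hmdef0]
  have hphi2 : phi A Rb Sb t x = Gf pb mb x (Real.exp (-(Sb * (pb - mb)) * t)) := by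
    simp only [phi, Gf, hc2, ← hpbdef0, ← hmbdef0]
  have hFid : ∀ y : ℝ, S * (p - y) * (y - m) = 2 * A * y + R - S * y ^ 2 := by
    intro y
    have hsum : S * (p + m) = 2 * A := by rw [hpq, hmq]; field_simp; ring
    have hprod : S * (p * m) = -R := by
      rw [hpq, hmq]
      field_simp
      linear_combination -hq2
    linear_combination y * hsum - hprod
  have hFbid : ∀ y : ℝ, Sb * (pb - y) * (y - mb) = 2 * A * y + Rb - Sb * y ^ 2 := by
    intro y
    have hsum : Sb * (pb + mb) = 2 * A := by rw [hpbq, hmbq]; field_simp; ring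
    have hprod : Sb * (pb * mb) = -Rb := by
      rw [hpbq, hmbq]
      field_simp
      linear_combination -hqb2
    linear_combination y * hsum - hprod
  have hple : pb ≤ p := by
    rcases le_total (Rb * Sb) (R * S) with hcase | hcase
    · have hqq : qb ≤ q := by
        rw [hq, hqb]; exact Real.sqrt_le_sqrt (by linarith)
      rw [hpq, hpbq]
      exact div_le_div₀ (by linarith) (by linarith) hS hSb
    · have hqq : q ≤ qb := by
        rw [hq, hqb]; exact Real.sqrt_le_sqrt (by linarith)
      have hid1 : p = R / (q - A) := by
        rw [hpq, div_eq_div_iff (ne_of_gt hS) (sub_ne_zero.2 (ne_of_gt hqA2))]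
        linear_combination hq2
      have hid2 : pb = Rb / (qb - A) := by
        rw [hpbq, div_eq_div_iff (ne_of_gt hSb0) (sub_ne_zero.2 (ne_of_gt hqbA2))]
        linear_combination hqb2
      rw [hid1, hid2]
      exact div_le_div₀ (by linarith) hR (by linarith) (by linarith)
  set B := max x p with hBdef
  have hBx : x ≤ B := le_max_left _ _
  have hBp : p ≤ B := le_max_right _ _
  have hBpb : pb ≤ B := le_trans hple hBp
  have hB0 : 0 ≤ B := le_trans hx hBx
  set Dst := (R - Rb) + (Sb - S) * B ^ 2 with hDstdef
  have hDst : 0 ≤ Dst := by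
    have : 0 ≤ (Sb - S) * B ^ 2 := mul_nonneg (by linarith) (by positivity)
    rw [hDstdef]; linarith
  have hlow1 : ∀ y, 0 ≤ y → y ≤ B → -(0:ℝ) ≤ S * (p - y) * (y - m) - Sb * (pb - y) * (y - mb) := by
    intro y hy0 hyB
    rw [hFid y, hFbid y]
    nlinarith [sq_nonneg y]
  have hupp1 : ∀ y, 0 ≤ y → y ≤ B → S * (p - y) * (y - m) - Sb * (pb - y) * (y - mb) ≤ Dst := by
    intro y hy0 hyB
    rw [hFid y, hFbid y, hDstdef]
    have h2 : (Sb - S) * y ^ 2 ≤ (Sb - S) * B ^ 2 :=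
      mul_le_mul_of_nonneg_left (pow_le_pow_left₀ hy0 hyB 2) (by linarith)
    linarith
  have hlow2 : ∀ y, 0 ≤ y → y ≤ B → -Dst ≤ Sb * (pb - y) * (y - mb) - S * (p - y) * (y - m) := by
    intro y hy0 hyB
    rw [hFid y, hFbid y, hDstdef]
    have h2 : (Sb - S) * y ^ 2 ≤ (Sb - S) * B ^ 2 :=
      mul_le_mul_of_nonneg_left (pow_le_pow_left₀ hy0 hyB 2) (by linarith)
    linarith
  have hupp2 : ∀ y, 0 ≤ y → y ≤ B → Sb * (pb - y) * (y - mb) - S * (p - y) * (y - m) ≤ 0 := by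
    intro y hy0 hyB
    rw [hFid y, hFbid y]
    nlinarith [sq_nonneg y]
  have app1 := core S p m Sb pb mb x t B Dst 0 hS hp hm hSb0 hpb hmb hx ht hBx hBpb hDst le_rfl
    hlow1 hupp1
  have app2 := core Sb pb mb S p m x t B 0 Dst hSb0 hpb hmb hS hp hm hx ht hBx hBp le_rfl hDst
    hlow2 hupp2
  rw [← hphi1, ← hphi2] at app1
  rw [← hphi1, ← hphi2] at app2
  have hlower : 0 ≤ phi A R S t x - phi A Rb Sb t x := by
    have := app1.1
    simpa using this
  refine ⟨hlower, ?_⟩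
  -- rewrite the constants
  have hlam : lam A R S = 2 * q := by rw [lam, ← hq]
  have hlamb : lam A Rb Sb = 2 * qb := by rw [lam, ← hqb]
  have hvpi : vpi A R S = 2 * q / (q - A) := by
    have h1 : A - q ≠ 0 := sub_ne_zero.2 (ne_of_lt hqA2)
    have h2 : q - A ≠ 0 := sub_ne_zero.2 (ne_of_gt hqA2)
    rw [vpi, ← hpdef0, ← hmdef0, hpq, hmq]
    field_simp
    ring
  have hvpib : vpi A Rb Sb = 2 * qb / (qb - A) := by
    have h1 : A - qb ≠ 0 := sub_ne_zero.2 (ne_of_lt hqbA2)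
    have h2 : qb - A ≠ 0 := sub_ne_zero.2 (ne_of_gt hqbA2)
    rw [vpi, ← hpbdef0, ← hmbdef0, hpbq, hmbq]
    field_simp
    ring
  rw [hvpi, hvpib, hlam, hlamb]
  have hqA' : (0:ℝ) < q - A := by linarith
  have hqbA' : (0:ℝ) < qb - A := by linarith
  have hrhs : 2 * (2 * q + 2 * qb)⁻¹ * (2 * qb / (qb - A)) * (2 * q / (q - A)) * Dst =
      8 * q * qb * Dst / ((2 * q + 2 * qb) * ((qb - A) * (q - A))) := by
    field_simp
    ring
  rw [hrhs]
  rcases le_total (Rb * Sb) (R * S) with hcase | hcase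
  · -- qb ≤ q : use app1
    have hqq : qb ≤ q := by rw [hq, hqb]; exact Real.sqrt_le_sqrt (by linarith)
    have hSm : S * (-m) = q - A := by rw [hmq]; field_simp; ring
    have hbound := app1.2
    rw [hSm] at hbound
    refine le_trans hbound ?_
    rw [div_le_div_iff₀ hqA' (by positivity)]
    have hqb0 : 0 < qb := lt_of_le_of_lt (abs_nonneg A) hqbA
    have hq0 : 0 < q := lt_of_le_of_lt (abs_nonneg A) hqA
    have haux1 : 0 ≤ (q + qb) * (A + qb) := mul_nonneg (by linarith) (by linarith)
    have haux2 : 0 ≤ qb * (q - qb) := mul_nonneg (by linarith) (by linarith)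
    have aux : (2 * q + 2 * qb) * (qb - A) ≤ 8 * q * qb := by linarith
    calc Dst * ((2 * q + 2 * qb) * ((qb - A) * (q - A)))
        = Dst * (q - A) * ((2 * q + 2 * qb) * (qb - A)) := by ring
      _ ≤ Dst * (q - A) * (8 * q * qb) :=
          mul_le_mul_of_nonneg_left aux (mul_nonneg hDst hqA'.le)
      _ = 8 * q * qb * Dst * (q - A) := by ring
  · -- q ≤ qb : use app2
    have hqq : q ≤ qb := by rw [hq, hqb]; exact Real.sqrt_le_sqrt (by linarith)
    have hSmb : Sb * (-mb) = qb - A := by rw [hmbq]; field_simp; ring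
    have hbound : phi A R S t x - phi A Rb Sb t x ≤ Dst / (Sb * (-mb)) := by
      have := app2.1
      linarith
    rw [hSmb] at hbound
    refine le_trans hbound ?_
    rw [div_le_div_iff₀ hqbA' (by positivity)]
    have hqb0 : 0 < qb := lt_of_le_of_lt (abs_nonneg A) hqbA
    have hq0 : 0 < q := lt_of_le_of_lt (abs_nonneg A) hqA
    have haux1 : 0 ≤ (q + qb) * (A + q) := mul_nonneg (by linarith) (by linarith)
    have haux2 : 0 ≤ q * (qb - q) := mul_nonneg (by linarith) (by linarith)
    have aux : (2 * q + 2 * qb) * (q - A) ≤ 8 * q * qb := by linarith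
    calc Dst * ((2 * q + 2 * qb) * ((qb - A) * (q - A)))
        = Dst * (qb - A) * ((2 * q + 2 * qb) * (q - A)) := by ring
      _ ≤ Dst * (qb - A) * (8 * q * qb) :=
          mul_le_mul_of_nonneg_left aux (mul_nonneg hDst hqbA'.le)
      _ = 8 * q * qb * Dst * (qb - A) := by ring
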